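/- Identifiability in the linear case of pre-ANMs: If g(x) = αx + ς is affine, g' is differentiable, h, h' are differentiable with h(1/2) = h'(1/2) = 0, and g(x + h(ε)) + βx = g'(x + h'(ε)) + β'x holds for all x in an open interval X and all ε ∈ [0,1], then g' is affine on the relevant domain, say g'(z) = α'z + ς', with ς = ς', α + β = α' + β', and α·h(ε) = α'·h'(ε) for all ε ∈ [0,1]. -/

import Mathlib

open Set

/-- identifiability in the linear case of pre-ANMs. If `g x = α x + ς` is
affine, `g'` is differentiable, `h, h'` are differentiable with `h(1/2) = h'(1/2) = 0`,
and `g (x + h ε) + β x = g' (x + h' ε) + β' x` for all `x` in an open interval `X` and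
`ε ∈ [0,1]`, then `g'` is affine on the relevant domain, `g' z = α' z + ς'`, with
`ς = ς'`, `α + β = α' + β'`, and `α · h ε = α' · h' ε` for all `ε ∈ [0,1]`. -/
theorem preANM_identifiability_linear
    (α ς β β' : ℝ) (g' h h' : ℝ → ℝ) (a b : ℝ) (hab : a < b)
    (hg'diff : Differentiable ℝ g')
    (hhdiff : ∀ ε ∈ Icc (0:ℝ) 1, DifferentiableAt ℝ h ε)
    (hh'diff : ∀ ε ∈ Icc (0:ℝ) 1, DifferentiableAt ℝ h' ε)
    (hh0 : h (1/2) = 0) (hh'0 : h' (1/2) = 0)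
    (heq : ∀ x ∈ Ioo a b, ∀ ε ∈ Icc (0:ℝ) 1,
      (α * (x + h ε) + ς) + β * x = g' (x + h' ε) + β' * x) :
    ∃ α' ς' : ℝ,
      (∀ x ∈ Ioo a b, ∀ ε ∈ Icc (0:ℝ) 1, g' (x + h' ε) = α' * (x + h' ε) + ς') ∧
      ς = ς' ∧ α + β = α' + β' ∧ ∀ ε ∈ Icc (0:ℝ) 1, α * h ε = α' * h' ε := by
  set α' : ℝ := α + β - β' with hα'
  -- pointwise formula for g' on shifted points
  have hg'eq : ∀ ε ∈ Icc (0:ℝ) 1, ∀ x ∈ Ioo a b,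
      g' (x + h' ε) = α' * x + (α * h ε + ς) := by
    intro ε hε x hx
    rw [hα']
    linear_combination - heq x hx ε hε
  -- derivative of g' at shifted points is α'
  have hdg : ∀ ε ∈ Icc (0:ℝ) 1, ∀ x ∈ Ioo a b, deriv g' (x + h' ε) = α' := by
    intro ε hε x hx
    have hF : HasDerivAt (fun y => g' (y + h' ε)) (deriv g' (x + h' ε)) x := by
      have h1 : HasDerivAt g' (deriv g' (x + h' ε)) (x + h' ε) :=
        (hg'diff _).hasDerivAt
      have h2 : HasDerivAt (fun y : ℝ => y + h' ε) 1 x := (hasDerivAt_id x).add_const _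
      simpa [Function.comp_def] using h1.comp x h2
    have hG : HasDerivAt (fun y => g' (y + h' ε)) α' x := by
      have hee : (fun y => α' * y + (α * h ε + ς)) =ᶠ[nhds x] (fun y => g' (y + h' ε)) := by
        filter_upwards [isOpen_Ioo.mem_nhds hx] with y hy
        exact (hg'eq ε hε y hy).symm
      have hlin : HasDerivAt (fun y : ℝ => α' * y + (α * h ε + ς)) α' x := by
        simpa using ((hasDerivAt_id x).const_mul α').add_const (α * h ε + ς)
      exact hlin.congr_of_eventuallyEq hee.symm
    exact hF.unique hG
  -- key derivative identity
  have key : ∀ ε ∈ Icc (0:ℝ) 1, α * deriv h ε = α' * deriv h' ε := by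
    intro ε hε
    have hx₀ : (a + b) / 2 ∈ Ioo a b := ⟨by linarith, by linarith⟩
    set x₀ : ℝ := (a + b) / 2
    have hψ : HasDerivAt (fun e => g' (x₀ + h' e)) (α' * deriv h' ε) ε := by
      have h2 : HasDerivAt (fun e => x₀ + h' e) (deriv h' ε) ε :=
        ((hh'diff ε hε).hasDerivAt).const_add x₀
      have h1 : HasDerivAt g' (deriv g' (x₀ + h' ε)) (x₀ + h' ε) :=
        (hg'diff _).hasDerivAt
      have h3 := h1.comp ε h2
      rw [hdg ε hε x₀ hx₀] at h3
      exact h3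
    have hL : HasDerivAt (fun e => α * h e + (α * x₀ + ς + (β - β') * x₀))
        (α * deriv h ε) ε :=
      (((hhdiff ε hε).hasDerivAt).const_mul α).add_const _
    have heqIcc : ∀ e ∈ Icc (0:ℝ) 1,
        (fun e => g' (x₀ + h' e)) e
          = (fun e => α * h e + (α * x₀ + ς + (β - β') * x₀)) e := by
      intro e he
      simp only
      linear_combination - heq x₀ hx₀ e he
    have hψ' : HasDerivWithinAt (fun e => α * h e + (α * x₀ + ς + (β - β') * x₀))
        (α' * deriv h' ε) (Icc (0:ℝ) 1) ε :=
      (hψ.hasDerivWithinAt).congr (fun e he => (heqIcc e he).symm) (heqIcc ε hε).symm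
    have hU : UniqueDiffWithinAt ℝ (Icc (0:ℝ) 1) ε :=
      (uniqueDiffOn_Icc (by norm_num : (0:ℝ) < 1)) ε hε
    have e1 := (hL.hasDerivWithinAt (s := Icc (0:ℝ) 1)).derivWithin hU
    have e2 := hψ'.derivWithin hU
    rw [← e1, ← e2]
  -- integrate: α h = α' h' on [0,1]
  have hφ : ∀ ε ∈ Icc (0:ℝ) 1, α * h ε = α' * h' ε := by
    have hconst : ∀ ε ∈ Icc (0:ℝ) 1,
        (fun e => α * h e - α' * h' e) ε = (fun e => α * h e - α' * h' e) 0 := by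
      apply constant_of_has_deriv_right_zero
      · intro e he
        exact (((hhdiff e he).const_mul α).sub
          ((hh'diff e he).const_mul α')).continuousAt.continuousWithinAt
      · intro e he
        have he' : e ∈ Icc (0:ℝ) 1 := Ico_subset_Icc_self he
        have hd : HasDerivAt (fun e => α * h e - α' * h' e)
            (α * deriv h e - α' * deriv h' e) e :=
          (((hhdiff e he').hasDerivAt).const_mul α).sub
            (((hh'diff e he').hasDerivAt).const_mul α')
        rw [key e he', sub_self] at hd
        exact hd.hasDerivWithinAt
    have hhalf : (1:ℝ)/2 ∈ Icc (0:ℝ) 1 := by norm_num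
    have h2 := hconst (1/2) hhalf
    simp only at h2
    rw [hh0, hh'0] at h2
    intro ε hε
    have h3 := hconst ε hε
    simp only at h3
    nlinarith [h2, h3]
  refine ⟨α', ς, ?_, rfl, by rw [hα']; ring, hφ⟩
  intro x hx ε hε
  rw [hg'eq ε hε x hx]
  linear_combination hφ ε hε
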